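/- Let x_1,…,x_m be real numbers and let A ∈ ℝ^{(ℓ+1)m×(ℓ+1)m} be the block lower-bidiagonal matrix with X = diag(x_1,…,x_m) in each of the ℓ+1 diagonal blocks and i·I in subdiagonal block position (i+1,i) for i = 1,…,ℓ. Let v = (e; 0; …; 0) ∈ ℝ^{(ℓ+1)m} with e the all-ones vector. Then for every k ≥ 0, every block index 0 ≤ i ≤ ℓ, and every 1 ≤ j ≤ m, the entry of A^k·v in block i at position j equals k(k−1)⋯(k−i+1)·x_j^{k−i} (the i-th falling factorial of k times x_j^{k−i}) when i ≤ k, and equals 0 when i > k. -/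
import Mathlib


open Matrix

/-- The block lower-bidiagonal matrix with `X = diag (x 1, …, x m)` in each of
the `ℓ + 1` diagonal blocks and `i • I` in subdiagonal block position
`(i+1, i)` for `i = 1, …, ℓ`. -/
def blockA (m ℓ : ℕ) (x : Fin m → ℝ) :
    Matrix (Fin (ℓ + 1) × Fin m) (Fin (ℓ + 1) × Fin m) ℝ :=
  Matrix.of fun p q =>
    if p.1 = q.1 ∧ p.2 = q.2 then x p.2
    else if (p.1 : ℕ) = (q.1 : ℕ) + 1 ∧ p.2 = q.2 then ((p.1 : ℕ) : ℝ)
    else 0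

/-- The vector `v = (e; 0; …; 0)` with `e` the all-ones vector of length `m`. -/
def eZeroVec (m ℓ : ℕ) : Fin (ℓ + 1) × Fin m → ℝ := fun p => if p.1 = 0 then 1 else 0

lemma blockA_mulVec (m ℓ : ℕ) (x : Fin m → ℝ) (w : Fin (ℓ + 1) × Fin m → ℝ)
    (i : Fin (ℓ + 1)) (j : Fin m) :
    (blockA m ℓ x *ᵥ w) (i, j) =
      x j * w (i, j) +
        ∑ q : Fin (ℓ + 1) × Fin m,
          (if (i : ℕ) = (q.1 : ℕ) + 1 ∧ q.2 = j then ((i : ℕ) : ℝ) * w q else 0) := by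
  simp only [mulVec, dotProduct]
  have hterm : ∀ q : Fin (ℓ + 1) × Fin m,
      blockA m ℓ x (i, j) q * w q =
        (if q = (i, j) then x j * w q else 0) +
          (if (i : ℕ) = (q.1 : ℕ) + 1 ∧ q.2 = j then ((i : ℕ) : ℝ) * w q else 0) := by
    intro q
    simp only [blockA, Matrix.of_apply]
    by_cases h1 : i = q.1 ∧ j = q.2
    · have hq : q = (i, j) := Prod.ext h1.1.symm h1.2.symm
      subst hq
      simp
    · rw [if_neg h1]
      have hq : ¬ q = (i, j) := by
        rintro rfl; exact h1 ⟨rfl, rfl⟩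
      rw [if_neg hq]
      by_cases h2 : (i : ℕ) = (q.1 : ℕ) + 1 ∧ j = q.2
      · rw [if_pos h2, if_pos ⟨h2.1, h2.2.symm⟩]; ring
      · rw [if_neg h2, if_neg (fun h => h2 ⟨h.1, h.2.symm⟩)]; ring
  rw [Finset.sum_congr rfl (fun q _ => hterm q), Finset.sum_add_distrib,
    Finset.sum_ite_eq' Finset.univ]
  simp

theorem pow_mulVec_eZeroVec_apply (m ℓ : ℕ) (x : Fin m → ℝ) (k : ℕ)
    (i : Fin (ℓ + 1)) (j : Fin m) :
    ((blockA m ℓ x ^ k) *ᵥ eZeroVec m ℓ) (i, j) =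
      if (i : ℕ) ≤ k then (k.descFactorial (i : ℕ) : ℝ) * x j ^ (k - (i : ℕ))
      else 0 := by
  induction k generalizing i j with
  | zero =>
    simp only [pow_zero, one_mulVec, eZeroVec, Nat.le_zero, Nat.descFactorial_zero,
      Nat.cast_one, Nat.zero_sub, pow_zero, mul_one]
    by_cases h : i = 0
    · subst h; simp
    · rw [if_neg h, if_neg (fun hv => h (Fin.ext (by simpa using hv)))]
  | succ k ih =>
    rw [pow_succ', ← mulVec_mulVec, blockA_mulVec, ih i j]
    obtain ⟨iv, hiv⟩ := i
    match iv, hiv with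
    | 0, hiv =>
      have hsum : ∑ q : Fin (ℓ + 1) × Fin m,
          (if ((⟨0, hiv⟩ : Fin (ℓ + 1)) : ℕ) = (q.1 : ℕ) + 1 ∧ q.2 = j
            then (((⟨0, hiv⟩ : Fin (ℓ + 1)) : ℕ) : ℝ) *
              ((blockA m ℓ x ^ k) *ᵥ eZeroVec m ℓ) q else 0) = 0 := by
        apply Finset.sum_eq_zero
        intro q _
        rw [if_neg]
        rintro ⟨h1, -⟩
        simp at h1
      rw [hsum]
      simp [pow_succ']
    | n + 1, hiv =>
      have hn : n < ℓ + 1 := by omega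
      have hcond : ∀ q : Fin (ℓ + 1) × Fin m,
          (((⟨n + 1, hiv⟩ : Fin (ℓ + 1)) : ℕ) = (q.1 : ℕ) + 1 ∧ q.2 = j) ↔
            q = (⟨n, hn⟩, j) := by
        intro q
        constructor
        · rintro ⟨h1, h2⟩
          refine Prod.ext (Fin.ext ?_) h2
          simp only [Fin.val_mk] at h1 ⊢
          omega
        · rintro rfl; exact ⟨rfl, rfl⟩
      have hsum : ∑ q : Fin (ℓ + 1) × Fin m,
          (if ((⟨n + 1, hiv⟩ : Fin (ℓ + 1)) : ℕ) = (q.1 : ℕ) + 1 ∧ q.2 = j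
            then (((⟨n + 1, hiv⟩ : Fin (ℓ + 1)) : ℕ) : ℝ) *
              ((blockA m ℓ x ^ k) *ᵥ eZeroVec m ℓ) q else 0) =
          ((n + 1 : ℕ) : ℝ) * ((blockA m ℓ x ^ k) *ᵥ eZeroVec m ℓ) (⟨n, hn⟩, j) := by
        rw [Finset.sum_congr rfl (fun q _ => if_congr (hcond q) rfl rfl),
          Finset.sum_ite_eq' Finset.univ]
        simp
      rw [hsum, ih ⟨n, hn⟩ j]
      simp only [Fin.val_mk]
      by_cases h : n + 1 ≤ k
      · have hnk : n ≤ k := by omega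
        rw [if_pos h, if_pos hnk, if_pos (by omega : n + 1 ≤ k + 1)]
        have hsub : k + 1 - (n + 1) = k - n := by omega
        have hxp : x j ^ (k - n) = x j * x j ^ (k - (n + 1)) := by
          rw [← pow_succ']; congr 1; omega
        rw [hsub, Nat.succ_descFactorial_succ, Nat.descFactorial_succ, hxp]
        push_cast [Nat.cast_sub hnk]
        ring
      · by_cases h' : n ≤ k
        · have hnk : n = k := by omega
          subst hnk
          rw [if_neg h, if_pos le_rfl, if_pos (by omega : n + 1 ≤ n + 1)]
          have hsub : n + 1 - (n + 1) = 0 := by omega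
          have hsub2 : n - n = 0 := by omega
          rw [hsub, hsub2, Nat.succ_descFactorial_succ]
          push_cast
          ring
        · rw [if_neg h, if_neg h', if_neg (by omega : ¬ n + 1 ≤ k + 1)]
          ring
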